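/- Let p, q be distinct odd primes, z an odd prime, and r, s, x, t positive integers with x > z. There are no such integers satisfying both p^r + q^s - 1 = p^{rx} and ((p^r+q^s)^z - 1)/(p^r+q^s-1) = q^t with q ≡ 1 (mod 2z). -/

import Mathlib

/-- Geometric sum is less than the next power (for base ≥ 2). -/
lemma geom_sum_lt_pow (N : ℕ) (hN : 2 ≤ N) : ∀ m, ∑ i ∈ Finset.range m, N ^ i < N ^ m := by
  intro m
  induction m with
  | zero => simp
  | succ m ih =>
    rw [Finset.sum_range_succ, pow_succ]
    have h1 : 1 ≤ N ^ m := Nat.one_le_pow _ _ (by omega)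
    nlinarith

/-- Integer Bernoulli-type inequality: `A^(n+1) ≤ (A-c)^(n+1) + (n+1)·c·A^n`. -/
lemma bern_aux (n : ℕ) (A c : ℤ) (hc : 0 ≤ c) (hcA : c ≤ A) :
    A ^ (n + 1) ≤ (A - c) ^ (n + 1) + (n + 1) * c * A ^ n := by
  induction n with
  | zero => push_cast; nlinarith
  | succ n ih =>
    have hA : 0 ≤ A := le_trans hc hcA
    have h1 : (A - c) ^ (n + 1) ≤ A ^ (n + 1) :=
      pow_le_pow_left₀ (by linarith) (by linarith) _
    have hmul : A * A ^ (n + 1) ≤ A * ((A - c) ^ (n + 1) + (↑n + 1) * c * A ^ n) := by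
      apply mul_le_mul_of_nonneg_left _ hA
      push_cast at ih ⊢; linarith
    have h4 : c * (A - c) ^ (n + 1) ≤ c * A ^ (n + 1) := mul_le_mul_of_nonneg_left h1 hc
    have key : A * ((A - c) ^ (n + 1) + ((n : ℤ) + 1) * c * A ^ n)
        = (A - c) ^ (n + 2) + c * (A - c) ^ (n + 1) + ((n : ℤ) + 1) * c * A ^ (n + 1) := by
      ring
    have e1 : A ^ (n + 1 + 1) = A * A ^ (n + 1) := by ring
    push_cast
    rw [show n + 1 + 1 = n + 2 from rfl] at *
    linarith [key, hmul, h4, e1]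

theorem stmt_16 (p q z r s x t : ℕ) (hp : p.Prime) (hpodd : Odd p)
    (hq : q.Prime) (hqodd : Odd q) (hpq : p ≠ q)
    (hz : z.Prime) (hzodd : Odd z)
    (hr : 0 < r) (hs : 0 < s) (ht : 0 < t) (hx : x > z)
    (hqmod : q ≡ 1 [MOD 2 * z])
    (h1 : p ^ r + q ^ s - 1 = p ^ (r * x))
    (h2 : ∑ i ∈ Finset.range z, (p ^ r + q ^ s) ^ i = q ^ t) : False := by
  -- basic size facts
  have hp3 : 3 ≤ p := by
    have h2p := hp.two_le
    have := Nat.odd_iff.mp hpodd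
    omega
  have hq3 : 3 ≤ q := by
    have h2q := hq.two_le
    have := Nat.odd_iff.mp hqodd
    omega
  have hz3 : 3 ≤ z := by
    have h2z := hz.two_le
    have := Nat.odd_iff.mp hzodd
    omega
  -- q ≥ 2z + 1 ≥ 7
  have hdvd : 2 * z ∣ q - 1 := (Nat.modEq_iff_dvd' (by omega)).mp hqmod.symm
  have hq7 : 2 * z + 1 ≤ q := by
    have := Nat.le_of_dvd (by omega) hdvd
    omega
  set N := p ^ r + q ^ s with hNdef
  have hpr3 : 3 ≤ p ^ r := le_trans hp3 (Nat.le_self_pow (by omega) p)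
  have hqs7 : 7 ≤ q ^ s := le_trans (by omega) (Nat.le_self_pow (by omega) q)
  have hN2 : 2 ≤ N := by omega
  have hNx : N = p ^ (r * x) + 1 := by omega
  -- split off the top term of the geometric sum
  have hzeq : z - 1 + 1 = z := by omega
  rw [← hzeq, Finset.sum_range_succ] at h2
  have hgeo := geom_sum_lt_pow N hN2 (z - 1)
  have hlow : N ^ (z - 1) ≤ q ^ t := by omega
  have hup : q ^ t < 2 * N ^ (z - 1) := by omega
  -- t is large: s*(z-1) < t
  have hqsN : q ^ s < N := by omega
  have hplt : (q ^ s) ^ (z - 1) < N ^ (z - 1) := Nat.pow_lt_pow_left hqsN (by omega)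
  have hst : s * (z - 1) < t := by
    have h5 : q ^ (s * (z - 1)) < q ^ t := by
      rw [pow_mul]
      exact lt_of_lt_of_le hplt hlow
    exact (Nat.pow_lt_pow_iff_right hq.one_lt).mp h5
  -- 2*(z-1)*p^r ≤ N
  have h2zp : 2 * (z - 1) * p ^ r ≤ N := by
    have e0 : 2 * (z - 1) < 2 ^ z := by
      have := Nat.lt_two_pow_self (n := z - 1)
      calc 2 * (z - 1) < 2 * 2 ^ (z - 1) := by omega
        _ = 2 ^ (z - 1 + 1) := (pow_succ' 2 (z - 1)).symm
        _ = 2 ^ z := by rw [hzeq]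
    have e1 : (2 : ℕ) ^ z ≤ 3 ^ z := Nat.pow_le_pow_left (by norm_num) z
    have e2 : (3 : ℕ) ^ z ≤ 3 ^ (x - 1) := Nat.pow_le_pow_right (by norm_num) (by omega)
    have e3 : (3 : ℕ) ^ (x - 1) ≤ p ^ (x - 1) := Nat.pow_le_pow_left hp3 _
    have e4 : p ^ (x - 1) ≤ p ^ (r * (x - 1)) :=
      Nat.pow_le_pow_right (by omega) (Nat.le_mul_of_pos_left _ hr)
    have e5 : 2 * (z - 1) ≤ p ^ (r * (x - 1)) := by omega
    have e6 : 2 * (z - 1) * p ^ r ≤ p ^ (r * (x - 1)) * p ^ r :=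
      Nat.mul_le_mul_right _ e5
    have e7 : p ^ (r * (x - 1)) * p ^ r = p ^ (r * x) := by
      rw [← pow_add]
      congr 1
      obtain ⟨y, hy⟩ : ∃ y, x = y + 1 := ⟨x - 1, by omega⟩
      rw [hy]
      simp [Nat.mul_succ]
    omega
  -- key bound: N^(z-1) ≤ 2*(q^s)^(z-1), via the integer Bernoulli inequality
  have hkey : N ^ (z - 1) ≤ 2 * (q ^ s) ^ (z - 1) := by
    have hb := bern_aux (z - 2) (N : ℤ) ((p ^ r : ℕ) : ℤ) (by positivity)
      (by exact_mod_cast (by omega : p ^ r ≤ N))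
    have hsub : (N : ℤ) - ((p ^ r : ℕ) : ℤ) = ((q ^ s : ℕ) : ℤ) := by
      push_cast [hNdef]; ring
    rw [hsub] at hb
    have hz21 : z - 2 + 1 = z - 1 := by omega
    rw [hz21] at hb
    -- hb : (N:ℤ)^(z-1) ≤ (q^s)^(z-1) + (↑(z-2)+1) * p^r * N^(z-2)
    have hcast : ((z - 2 : ℕ) : ℤ) + 1 = ((z - 1 : ℕ) : ℤ) := by
      have : ((z - 2 : ℕ) : ℤ) = (z : ℤ) - 2 := by
        have : (2 : ℕ) ≤ z := by omega
        omega
      have h2 : ((z - 1 : ℕ) : ℤ) = (z : ℤ) - 1 := by omega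
      omega
    rw [hcast] at hb
    -- now: 2*(z-1)*p^r ≤ N in ℤ, multiply by N^(z-2) ≥ 0
    have hNZ : (2 : ℤ) * ((z - 1 : ℕ) : ℤ) * ((p ^ r : ℕ) : ℤ) ≤ (N : ℤ) := by
      exact_mod_cast h2zp
    have hpow2 : (0 : ℤ) ≤ (N : ℤ) ^ (z - 2) := by positivity
    have hmul2 : (2 : ℤ) * (((z - 1 : ℕ) : ℤ) * ((p ^ r : ℕ) : ℤ) * (N : ℤ) ^ (z - 2))
        ≤ (N : ℤ) * (N : ℤ) ^ (z - 2) := by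
      have := mul_le_mul_of_nonneg_right hNZ hpow2
      linarith [this]
    have hNpow : (N : ℤ) * (N : ℤ) ^ (z - 2) = (N : ℤ) ^ (z - 1) := by
      have hzz : z - 2 + 1 = z - 1 := by omega
      rw [← hzz, pow_succ']
    have final : (N : ℤ) ^ (z - 1) ≤ 2 * ((q ^ s : ℕ) : ℤ) ^ (z - 1) := by
      nlinarith [hb, hmul2, hNpow]
    exact_mod_cast final
  -- final contradiction
  have e8 : (q ^ s) ^ (z - 1) = q ^ (s * (z - 1)) := (pow_mul q s (z - 1)).symm
  have e9 : q ^ (s * (z - 1)) ≤ q ^ (t - 1) :=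
    Nat.pow_le_pow_right (by omega) (by omega)
  have e10 : q ^ t = q ^ (t - 1) * q := by
    rw [← pow_succ]
    congr 1
    omega
  have e11 : 1 ≤ q ^ (t - 1) := Nat.one_le_pow _ _ (by omega)
  -- q^t < 2*N^(z-1) ≤ 4*(q^s)^(z-1) ≤ 4*q^(t-1), but q^t = q^(t-1)*q ≥ 7*q^(t-1)
  have c1 : q ^ t < 4 * q ^ (t - 1) := by
    calc q ^ t < 2 * N ^ (z - 1) := hup
      _ ≤ 4 * (q ^ s) ^ (z - 1) := by omega
      _ = 4 * q ^ (s * (z - 1)) := by rw [e8]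
      _ ≤ 4 * q ^ (t - 1) := by omega
  have c2 : 7 * q ^ (t - 1) ≤ q ^ t := by
    rw [e10, Nat.mul_comm (q ^ (t - 1)) q]
    exact Nat.mul_le_mul_right _ (by omega)
  omega
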